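/- Let p be an even integer with p ≥ 2 and let i, j be integers with 1 ≤ j ≤ i ≤ p/2. Then for all reals s, t ≥ 0 one has 2·s^p·C(p/2−1,i)·C(i,j) + s^p·C(p/2−1,i−1)·C(i−1,j) + 2·t^p·C(p/2−1,i−1)·C(i−1,j−1) + t^p·C(p/2−1,i−1)·C(i−1,j) ≥ 2·s^{p−(i+j)}·t^{i+j}·C(p/2,i)·C(i,j). -/

import Mathlib

lemma aux_amgm (n a b : ℕ) (hab : a + b = n) (hn : 0 < n) (s t : ℝ)
    (hs : 0 ≤ s) (ht : 0 ≤ t) :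
    (n : ℝ) * (s ^ a * t ^ b) ≤ (a : ℝ) * s ^ n + (b : ℝ) * t ^ n := by
  have hn' : (n : ℝ) ≠ 0 := by positivity
  have h := Real.geom_mean_le_arith_mean2_weighted (w₁ := (a : ℝ) / n) (w₂ := (b : ℝ) / n)
    (p₁ := s ^ n) (p₂ := t ^ n) (by positivity) (by positivity) (by positivity) (by positivity)
    (by field_simp; exact_mod_cast hab)
  have h1 : (s ^ n : ℝ) ^ ((a : ℝ) / n) = s ^ a := by
    rw [← Real.rpow_natCast s n, ← Real.rpow_natCast s a, ← Real.rpow_mul hs]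
    congr 1; field_simp
  have h2 : (t ^ n : ℝ) ^ ((b : ℝ) / n) = t ^ b := by
    rw [← Real.rpow_natCast t n, ← Real.rpow_natCast t b, ← Real.rpow_mul ht]
    congr 1; field_simp
  rw [h1, h2] at h
  have := mul_le_mul_of_nonneg_left h (le_of_lt (by positivity : (0:ℝ) < n))
  calc (n : ℝ) * (s ^ a * t ^ b) ≤ (n : ℝ) * ((a : ℝ)/n * s ^ n + (b : ℝ)/n * t ^ n) := this
    _ = (a : ℝ) * s ^ n + (b : ℝ) * t ^ n := by field_simp

theorem stmt19 (p : ℕ) (hp2 : 2 ≤ p) (hpe : Even p) (i j : ℕ)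
    (hj1 : 1 ≤ j) (hji : j ≤ i) (hip : i ≤ p / 2)
    (s t : ℝ) (hs : 0 ≤ s) (ht : 0 ≤ t) :
    2 * s ^ p * ((p / 2 - 1).choose i : ℝ) * (i.choose j : ℝ)
        + s ^ p * ((p / 2 - 1).choose (i - 1) : ℝ) * ((i - 1).choose j : ℝ)
        + 2 * t ^ p * ((p / 2 - 1).choose (i - 1) : ℝ) * ((i - 1).choose (j - 1) : ℝ)
        + t ^ p * ((p / 2 - 1).choose (i - 1) : ℝ) * ((i - 1).choose j : ℝ)
      ≥ 2 * s ^ (p - (i + j)) * t ^ (i + j) * ((p / 2).choose i : ℝ) * (i.choose j : ℝ) := by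
  obtain ⟨i', rfl⟩ : ∃ i', i = i' + 1 := ⟨i - 1, by omega⟩
  obtain ⟨j', rfl⟩ : ∃ j', j = j' + 1 := ⟨j - 1, by omega⟩
  have hpm : p = 2 * (p / 2) := by
    obtain ⟨r, hr⟩ := hpe; omega
  obtain ⟨m', hm'⟩ : ∃ m', p / 2 = m' + 1 := ⟨p / 2 - 1, by omega⟩
  rw [hm'] at hip ⊢
  rw [hm'] at hpm
  simp only [Nat.add_sub_cancel]
  set a := (m'.choose (i' + 1) : ℝ) with ha
  set b := (m'.choose i' : ℝ) with hb
  set c := (i'.choose (j' + 1) : ℝ) with hc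
  set d := (i'.choose j' : ℝ) with hd
  have ha0 : 0 ≤ a := by positivity
  have hb0 : 0 ≤ b := by positivity
  have hc0 : 0 ≤ c := by positivity
  have hd0 : 0 ≤ d := by positivity
  -- Pascal
  have hP1 : ((m' + 1).choose (i' + 1) : ℝ) = a + b := by
    rw [Nat.choose_succ_succ']; push_cast; ring
  have hP2 : ((i' + 1).choose (j' + 1) : ℝ) = c + d := by
    rw [Nat.choose_succ_succ']; push_cast; ring
  -- succ_mul_choose
  have hS1 : ((m' : ℝ) + 1) * b = ((m' + 1).choose (i' + 1) : ℝ) * ((i' : ℝ) + 1) := by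
    have h := Nat.add_one_mul_choose_eq m' i'
    rw [hb]; exact_mod_cast h
  have hS2 : ((i' : ℝ) + 1) * d = ((i' + 1).choose (j' + 1) : ℝ) * ((j' : ℝ) + 1) := by
    have h := Nat.add_one_mul_choose_eq i' j'
    rw [hd]; exact_mod_cast h
  rw [hP1] at hS1
  rw [hP2] at hS2
  set k := i' + 1 + (j' + 1) with hk
  have hkp : k ≤ p := by omega
  have hp0 : 0 < p := by omega
  -- AM-GM
  have haux := aux_amgm p (p - k) k (by omega) hp0 s t hs ht
  have hcast : ((p - k : ℕ) : ℝ) = (p : ℝ) - k := by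
    push_cast [Nat.cast_sub hkp]; ring
  rw [hcast] at haux
  -- key identities over ℝ
  have hkr : (k : ℝ) = (i' : ℝ) + 1 + (j' + 1) := by push_cast [hk]; ring
  have hpr : (p : ℝ) = 2 * ((m' : ℝ) + 1) := by
    have : (p : ℝ) = ((2 * (m' + 1) : ℕ) : ℝ) := by exact_mod_cast congrArg (Nat.cast : ℕ → ℝ) hpm
    push_cast at this; linarith
  rw [hP1, hP2]
  set D : ℝ := 2 * (a + b) * (c + d) with hD
  have hD0 : 0 ≤ D := by positivity
  have hpB : (p : ℝ) * (2 * b * d + b * c) = (k : ℝ) * D := by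
    rw [hpr, hkr, hD]; linear_combination 2 * (2 * d + c) * hS1 + 2 * (a + b) * hS2
  have hpA : (p : ℝ) * (2 * a * (c + d) + b * c) = ((p : ℝ) - k) * D := by
    have : (p : ℝ) * (2 * a * (c + d) + b * c) + (p : ℝ) * (2 * b * d + b * c) = (p : ℝ) * D := by
      rw [hD]; ring
    linarith [hpB]
  have key : D * ((p : ℝ) * (s ^ (p - k) * t ^ k)) ≤
      D * (((p : ℝ) - k) * s ^ p + (k : ℝ) * t ^ p) :=
    mul_le_mul_of_nonneg_left haux hD0
  have hs0 : 0 ≤ s ^ p := by positivity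
  have ht0 : 0 ≤ t ^ p := by positivity
  have e1 : (p : ℝ) * (2 * s ^ (p - k) * t ^ k * (a + b) * (c + d))
      = D * ((p : ℝ) * (s ^ (p - k) * t ^ k)) := by rw [hD]; ring
  have e2 : D * (((p : ℝ) - k) * s ^ p + (k : ℝ) * t ^ p)
      = (p : ℝ) * (2 * s ^ p * a * (c + d) + s ^ p * b * c + 2 * t ^ p * b * d + t ^ p * b * c) := by
    calc D * (((p : ℝ) - k) * s ^ p + (k : ℝ) * t ^ p)
        = ((p : ℝ) - k) * D * s ^ p + (k : ℝ) * D * t ^ p := by ring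
      _ = (p : ℝ) * (2 * a * (c + d) + b * c) * s ^ p
          + (p : ℝ) * (2 * b * d + b * c) * t ^ p := by rw [hpA, hpB]
      _ = _ := by ring
  have final : (p : ℝ) * (2 * s ^ (p - k) * t ^ k * (a + b) * (c + d)) ≤
      (p : ℝ) * (2 * s ^ p * a * (c + d) + s ^ p * b * c + 2 * t ^ p * b * d + t ^ p * b * c) := by
    rw [e1, ← e2]; exact key
  have hppos : (0 : ℝ) < p := by positivity
  exact le_of_mul_le_mul_left final hppos
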